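/- Let G be a connected graph, and suppose a parameter field w: V → ℝ^p achieves local error Err_local = (1/n) Σ_v ℓ_v(w(v)) ≤ ε with variation energy E_var = Σ_{(u,v)∈E}‖w(u)−w(v)‖², where each ℓ_v is L_w-Lipschitz and nonnegative. Then the constant field at the mean w̄ achieves average error at most ε + L_w·sqrt(E_var/(n·λ₂)). In particular, if the best constant-field average error exceeds ε + δ for some δ > 0, then every field achieving average local error ≤ ε has variation energy at least n·λ₂·δ²/L_w². -/

import Mathlib

open Finset

variable {V : Type*}

/-- Scalar Dirichlet energy, each undirected edge counted once. -/
noncomputable def dEnergy [Fintype V] (G : SimpleGraph V) [DecidableRel G.Adj] (f : V → ℝ) : ℝ :=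
  (∑ u : V, ∑ v : V, if G.Adj u v then (f u - f v) ^ 2 else 0) / 2

/-- Algebraic connectivity `λ₂` of `G` via the Rayleigh quotient over nonzero mean-zero
fields (the second-smallest Laplacian eigenvalue for connected graphs). -/
noncomputable def lam2 [Fintype V] (G : SimpleGraph V) [DecidableRel G.Adj] : ℝ :=
  sInf { r : ℝ | ∃ f : V → ℝ, f ≠ 0 ∧ (∑ v : V, f v) = 0 ∧
    r = dEnergy G f / (∑ v : V, (f v) ^ 2) }

/-- Vector-valued Dirichlet (variation) energy `Σ_{(u,v)∈E} ‖w u - w v‖²`. -/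
noncomputable def vEnergy [Fintype V] (G : SimpleGraph V) [DecidableRel G.Adj] {p : ℕ}
    (w : V → EuclideanSpace ℝ (Fin p)) : ℝ :=
  (∑ u : V, ∑ v : V, if G.Adj u v then ‖w u - w v‖ ^ 2 else 0) / 2

lemma dEnergy_nonneg [Fintype V] (G : SimpleGraph V) [DecidableRel G.Adj] (f : V → ℝ) :
    0 ≤ dEnergy G f := by
  unfold dEnergy
  have : (0:ℝ) ≤ ∑ u : V, ∑ v : V, if G.Adj u v then (f u - f v) ^ 2 else 0 := by
    refine Finset.sum_nonneg fun u _ => Finset.sum_nonneg fun v _ => ?_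
    split <;> positivity
  linarith

lemma vEnergy_nonneg [Fintype V] (G : SimpleGraph V) [DecidableRel G.Adj] {p : ℕ}
    (w : V → EuclideanSpace ℝ (Fin p)) : 0 ≤ vEnergy G w := by
  unfold vEnergy
  have : (0:ℝ) ≤ ∑ u : V, ∑ v : V, if G.Adj u v then ‖w u - w v‖ ^ 2 else 0 := by
    refine Finset.sum_nonneg fun u _ => Finset.sum_nonneg fun v _ => ?_
    split <;> positivity
  linarith

lemma lam2_mul_le [Fintype V] (G : SimpleGraph V) [DecidableRel G.Adj] (f : V → ℝ)
    (hmean : (∑ v : V, f v) = 0) :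
    lam2 G * ∑ v : V, (f v) ^ 2 ≤ dEnergy G f := by
  by_cases hf : f = 0
  · subst hf; simp [dEnergy]
  · have hs : 0 < ∑ v : V, (f v) ^ 2 := by
      obtain ⟨v, hv⟩ := Function.ne_iff.mp hf
      exact Finset.sum_pos' (fun v _ => by positivity)
        ⟨v, Finset.mem_univ v, pow_two_pos_of_ne_zero hv⟩
    have hle : lam2 G ≤ dEnergy G f / (∑ v : V, (f v) ^ 2) := by
      apply csInf_le
      · refine ⟨0, fun r hr => ?_⟩
        obtain ⟨g, hg0, hgm, rfl⟩ := hr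
        have hsg : 0 < ∑ v : V, (g v) ^ 2 := by
          obtain ⟨v, hv⟩ := Function.ne_iff.mp hg0
          exact Finset.sum_pos' (fun v _ => by positivity)
            ⟨v, Finset.mem_univ v, pow_two_pos_of_ne_zero hv⟩
        exact div_nonneg (dEnergy_nonneg G g) hsg.le
      · exact ⟨f, hf, hmean, rfl⟩
    calc lam2 G * ∑ v : V, (f v) ^ 2
        ≤ (dEnergy G f / (∑ v : V, (f v) ^ 2)) * ∑ v : V, (f v) ^ 2 := by
          exact mul_le_mul_of_nonneg_right hle hs.le
      _ = dEnergy G f := div_mul_cancel₀ _ hs.ne'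

/-- If a parameter field `w` achieves average local error `≤ ε` with variation energy
`E_var`, then the constant field at the mean achieves average error at most
`ε + Lw·sqrt(E_var/(n·λ₂))`;  consequently, if every constant field has average error
exceeding `ε + δ`, every such field has variation energy at least `n·λ₂·δ²/Lw²`. -/
theorem obstruction_lower_bound [Fintype V] (G : SimpleGraph V) [DecidableRel G.Adj]
    (hconn : G.Connected) (hpos : 0 < lam2 G)
    {p : ℕ} (ℓ : V → EuclideanSpace ℝ (Fin p) → ℝ) (Lw : ℝ) (hLw : 0 < Lw)
    (hnonneg : ∀ v x, 0 ≤ ℓ v x)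
    (hlip : ∀ v (a b : EuclideanSpace ℝ (Fin p)), |ℓ v a - ℓ v b| ≤ Lw * ‖a - b‖)
    (w : V → EuclideanSpace ℝ (Fin p)) (ε : ℝ)
    (herr : ((Fintype.card V : ℝ))⁻¹ * (∑ v : V, ℓ v (w v)) ≤ ε) :
    (((Fintype.card V : ℝ))⁻¹ * (∑ v : V, ℓ v ((Fintype.card V : ℝ)⁻¹ • ∑ u : V, w u))
        ≤ ε + Lw * Real.sqrt ((vEnergy G w) / ((Fintype.card V : ℝ) * lam2 G))) ∧
    (∀ δ : ℝ, 0 < δ →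
      (∀ c : EuclideanSpace ℝ (Fin p),
        ε + δ < ((Fintype.card V : ℝ))⁻¹ * (∑ v : V, ℓ v c)) →
      (Fintype.card V : ℝ) * lam2 G * δ ^ 2 / Lw ^ 2 ≤ vEnergy G w) := by
  haveI : Nonempty V := hconn.nonempty
  set n : ℝ := (Fintype.card V : ℝ) with hn_def
  have hn : 0 < n := by
    have h := Fintype.card_pos (α := V)
    simp only [hn_def]
    exact_mod_cast h
  set wbar : EuclideanSpace ℝ (Fin p) := (n)⁻¹ • ∑ u : V, w u with hwbar
  -- norm squared in coordinates
  have hnormsq : ∀ x : EuclideanSpace ℝ (Fin p), ‖x‖ ^ 2 = ∑ i, (x i) ^ 2 := by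
    intro x
    rw [EuclideanSpace.norm_eq, Real.sq_sqrt (by positivity)]
    simp [sq_abs]
  -- coordinate fields are mean-zero
  have hmean : ∀ i : Fin p, (∑ v : V, (w v i - wbar i)) = 0 := by
    intro i
    have hbar : wbar i = n⁻¹ * ∑ u : V, w u i := by
      rw [hwbar]
      show n⁻¹ * (∑ u : V, w u) i = _
      rw [WithLp.ofLp_sum, Fintype.sum_apply]
    rw [Finset.sum_sub_distrib, Finset.sum_const, nsmul_eq_mul, hbar]
    have hc : ((Finset.univ (α := V)).card : ℝ) = n := by simp [hn_def]
    rw [hc]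
    field_simp
    ring
  -- key: lam2 * Σ ‖w v - wbar‖² ≤ vEnergy
  set S : ℝ := ∑ v : V, ‖w v - wbar‖ ^ 2 with hS_def
  have hS0 : 0 ≤ S := Finset.sum_nonneg fun v _ => by positivity
  have hkey : lam2 G * S ≤ vEnergy G w := by
    have hSswap : S = ∑ i : Fin p, ∑ v : V, (w v i - wbar i) ^ 2 := by
      rw [hS_def, Finset.sum_comm]
      refine Finset.sum_congr rfl fun v _ => ?_
      rw [hnormsq]
      rfl
    have hE : vEnergy G w = ∑ i : Fin p, dEnergy G (fun v => w v i - wbar i) := by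
      unfold vEnergy dEnergy
      rw [← Finset.sum_div]
      congr 1
      calc (∑ u : V, ∑ v : V, if G.Adj u v then ‖w u - w v‖ ^ 2 else 0)
          = ∑ u : V, ∑ v : V, ∑ i : Fin p,
              if G.Adj u v then ((w u i - wbar i) - (w v i - wbar i)) ^ 2 else 0 := by
            refine Finset.sum_congr rfl fun u _ => Finset.sum_congr rfl fun v _ => ?_
            split
            · rw [hnormsq]
              refine Finset.sum_congr rfl fun i _ => ?_
              have hco : (w u - w v) i = w u i - w v i := rfl
              rw [hco]; ring
            · simp
        _ = ∑ u : V, ∑ i : Fin p, ∑ v : V,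
              if G.Adj u v then ((w u i - wbar i) - (w v i - wbar i)) ^ 2 else 0 :=
            Finset.sum_congr rfl fun u _ => Finset.sum_comm
        _ = ∑ i : Fin p, ∑ u : V, ∑ v : V,
              if G.Adj u v then ((w u i - wbar i) - (w v i - wbar i)) ^ 2 else 0 :=
            Finset.sum_comm
    rw [hSswap, hE, Finset.mul_sum]
    refine Finset.sum_le_sum fun i _ => ?_
    exact lam2_mul_le G _ (hmean i)
  -- average distance bound
  set T : ℝ := ∑ v : V, ‖w v - wbar‖ with hT_def
  have hT0 : 0 ≤ T := Finset.sum_nonneg fun v _ => by positivity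
  have hTS : T ^ 2 ≤ n * S := by
    have := sq_sum_le_card_mul_sum_sq (s := (Finset.univ : Finset V))
      (f := fun v => ‖w v - wbar‖)
    simpa [hT_def, hS_def, hn_def] using this
  -- part 1
  have hQ0 : 0 ≤ vEnergy G w / (n * lam2 G) :=
    div_nonneg (vEnergy_nonneg G w) (by positivity)
  have hpart1 : n⁻¹ * (∑ v : V, ℓ v wbar)
      ≤ ε + Lw * Real.sqrt (vEnergy G w / (n * lam2 G)) := by
    have hstep : ∀ v : V, ℓ v wbar ≤ ℓ v (w v) + Lw * ‖w v - wbar‖ := by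
      intro v
      have h1 := hlip v wbar (w v)
      have h2 : ℓ v wbar - ℓ v (w v) ≤ |ℓ v wbar - ℓ v (w v)| := le_abs_self _
      have h3 : ‖wbar - w v‖ = ‖w v - wbar‖ := norm_sub_rev _ _
      linarith [h1, h2, h3 ▸ h1]
    have hsum : (∑ v : V, ℓ v wbar) ≤ (∑ v : V, ℓ v (w v)) + Lw * T := by
      calc (∑ v : V, ℓ v wbar) ≤ ∑ v : V, (ℓ v (w v) + Lw * ‖w v - wbar‖) :=
            Finset.sum_le_sum fun v _ => hstep v
        _ = (∑ v : V, ℓ v (w v)) + Lw * T := by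
            rw [Finset.sum_add_distrib, Finset.mul_sum]
    have havg : n⁻¹ * (∑ v : V, ℓ v wbar)
        ≤ ε + Lw * (n⁻¹ * T) := by
      have := mul_le_mul_of_nonneg_left hsum (inv_nonneg.mpr hn.le)
      calc n⁻¹ * (∑ v : V, ℓ v wbar)
          ≤ n⁻¹ * ((∑ v : V, ℓ v (w v)) + Lw * T) := this
        _ = n⁻¹ * (∑ v : V, ℓ v (w v)) + Lw * (n⁻¹ * T) := by ring
        _ ≤ ε + Lw * (n⁻¹ * T) := by linarith
    have hTsqrt : n⁻¹ * T ≤ Real.sqrt (vEnergy G w / (n * lam2 G)) := by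
      have h5 : S ≤ vEnergy G w / lam2 G := by
        rw [le_div_iff₀ hpos]; linarith [hkey]
      have hsq : (n⁻¹ * T) ^ 2 ≤ vEnergy G w / (n * lam2 G) := by
        calc (n⁻¹ * T) ^ 2 = T ^ 2 / n ^ 2 := by
              rw [mul_pow]; field_simp
          _ ≤ (n * S) / n ^ 2 := by gcongr
          _ = S / n := by rw [sq]; rw [mul_div_mul_left _ _ hn.ne']
          _ ≤ (vEnergy G w / lam2 G) / n := by gcongr
          _ = vEnergy G w / (n * lam2 G) := by
              rw [div_div]; ring_nf
      exact (Real.le_sqrt (by positivity) hQ0).mpr hsq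
    calc n⁻¹ * (∑ v : V, ℓ v wbar) ≤ ε + Lw * (n⁻¹ * T) := havg
      _ ≤ ε + Lw * Real.sqrt (vEnergy G w / (n * lam2 G)) := by
          have := mul_le_mul_of_nonneg_left hTsqrt hLw.le
          linarith
  refine ⟨hpart1, ?_⟩
  intro δ hδ hall
  have h1 := hall wbar
  have h2 : ε + δ < ε + Lw * Real.sqrt (vEnergy G w / (n * lam2 G)) :=
    lt_of_lt_of_le h1 hpart1
  have h3 : δ < Lw * Real.sqrt (vEnergy G w / (n * lam2 G)) := by linarith
  have h4 : δ / Lw < Real.sqrt (vEnergy G w / (n * lam2 G)) := by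
    rw [div_lt_iff₀ hLw]
    linarith [h3, mul_comm Lw (Real.sqrt (vEnergy G w / (n * lam2 G)))]
  have h5 : (δ / Lw) ^ 2 ≤ vEnergy G w / (n * lam2 G) := by
    have hd : 0 < δ / Lw := div_pos hδ hLw
    nlinarith [Real.sq_sqrt hQ0, Real.sqrt_nonneg (vEnergy G w / (n * lam2 G))]
  have h6 : n * lam2 G * ((δ / Lw) ^ 2) ≤ vEnergy G w := by
    have := mul_le_mul_of_nonneg_left h5 (by positivity : (0:ℝ) ≤ n * lam2 G)
    calc n * lam2 G * ((δ / Lw) ^ 2) ≤ n * lam2 G * (vEnergy G w / (n * lam2 G)) := this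
      _ = vEnergy G w := by field_simp
  calc n * lam2 G * δ ^ 2 / Lw ^ 2 = n * lam2 G * ((δ / Lw) ^ 2) := by
        field_simp
    _ ≤ vEnergy G w := h6
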